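/- Let f be holomorphic on the unbounded sector S_{d,δ} with values in a complex Banach space E, continuous at 0, satisfying ‖f(u)‖ ≤ C|u| exp(K|u|^k). Then the function u ↦ k u^k f(u) admits a Laplace transform of order k along direction d and L_k^d(k u^k f(u))(t) = t^{k+1} ∂_t (L_k^d(f)(t)) on the common domain. -/

import Mathlib

open Complex Metric Set MeasureTheory

noncomputable section

def sect (d δ : ℝ) : Set ℂ := {u : ℂ | u ≠ 0 ∧ |u.arg - d| < δ}

def laplaceRay {E : Type*} [NormedAddCommGroup E] [NormedSpace ℂ E]
    (k : ℕ) (γ : ℝ) (f : ℂ → E) (t : ℂ) : E :=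
  (k : ℝ) • ∫ r in Set.Ioi (0 : ℝ),
    (Complex.exp (-(((r : ℂ) * Complex.exp (γ * Complex.I)) / t) ^ k) / (r : ℂ)) •
      f ((r : ℂ) * Complex.exp (γ * Complex.I))

lemma aux_key (γ : ℝ) (t : ℂ) (ht : t ≠ 0) :
    Complex.exp (γ * Complex.I) / t
      = ((‖t‖⁻¹ : ℝ) : ℂ) * Complex.exp (((γ - t.arg : ℝ) : ℂ) * Complex.I) := by
  have habs : ((‖t‖ : ℝ) : ℂ) ≠ 0 := by
    simpa using (norm_ne_zero_iff.mpr ht)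
  conv_lhs => rw [show t = (‖t‖ : ℂ) * Complex.exp (t.arg * Complex.I) from
    (Complex.norm_mul_exp_arg_mul_I t).symm]
  push_cast
  rw [sub_mul, Complex.exp_sub]
  field_simp

lemma aux_psi (k : ℕ) (γ : ℝ) (t : ℂ) (ht : t ≠ 0) :
    ((Complex.exp ((γ : ℂ) * Complex.I) / t) ^ k).re
      = Real.cos (k * (γ - t.arg)) * (‖t‖ ^ k)⁻¹ := by
  rw [aux_key γ t ht, mul_pow, ← Complex.exp_nat_mul]
  rw [show ((k : ℂ) * (((γ - t.arg : ℝ) : ℂ) * Complex.I)) = (((k * (γ - t.arg) : ℝ)) : ℂ) * Complex.I by push_cast; ring]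
  rw [show (((‖t‖⁻¹ : ℝ) : ℂ) ^ k) = (((‖t‖ ^ k)⁻¹ : ℝ) : ℂ) by push_cast; ring]
  rw [Complex.re_ofReal_mul, Complex.exp_ofReal_mul_I_re]
  ring

lemma aux_deriv (k : ℕ) (u x : ℂ) (hx : x ≠ 0) :
    HasDerivAt (fun y : ℂ => Complex.exp (-(u / y) ^ k))
      (Complex.exp (-(u / x) ^ k) * ((k : ℂ) * u ^ k * x ^ (-(k:ℤ) - 1))) x := by
  have h0 : ∀ y : ℂ, -(u / y) ^ k = -u ^ k * y ^ (-(k:ℤ)) := by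
    intro y
    rw [div_pow, zpow_neg, zpow_natCast, div_eq_mul_inv, neg_mul]
  have h1 := ((hasDerivAt_zpow (-(k:ℤ)) x (Or.inl hx)).const_mul (-u ^ k)).cexp
  have h3 : (fun y : ℂ => Complex.exp (-(u / y) ^ k))
      = fun y => Complex.exp (-u ^ k * y ^ (-(k:ℤ))) := funext fun y => by rw [h0 y]
  rw [h3]
  refine h1.congr_deriv ?_
  rw [← h0 x]
  push_cast
  ring

lemma aux_int (n k : ℕ) (hk : 1 ≤ k) (c b : ℝ) (hb : 0 < b) :
    IntegrableOn (fun r : ℝ => c * (r ^ n * Real.exp (-b * r ^ k))) (Ioi 0) := by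
  have h := integrableOn_rpow_mul_exp_neg_mul_rpow (p := (k:ℝ)) (s := (n:ℝ))
    (neg_one_lt_zero.trans_le (Nat.cast_nonneg n)) (by exact_mod_cast hk) hb
  have h2 := h.const_mul c
  simpa [Real.rpow_natCast, IntegrableOn] using h2

/-- `L_k^d(k u^k f(u))(t) = t^{k+1} ∂_t (L_k^d f)(t)` on the common domain. -/
theorem stmt8_laplace_of_kuk_f
    {E : Type*} [NormedAddCommGroup E] [NormedSpace ℂ E] [CompleteSpace E]
    (k : ℕ) (hk : 1 ≤ k) (d δ C K δ1 : ℝ) (hδ : 0 < δ) (hC : 0 < C) (hK : 0 < K)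
    (hδ1 : 0 < δ1)
    (f : ℂ → E) (hf : DifferentiableOn ℂ f (sect d δ))
    (hcont : ContinuousOn f (sect d δ ∪ {0}))
    (hgrowth : ∀ u ∈ sect d δ,
      ‖f u‖ ≤ C * ‖u‖ * Real.exp (K * ‖u‖ ^ k))
    (γ : ℝ) (hray : ∀ r : ℝ, 0 < r → (r : ℂ) * Complex.exp (γ * Complex.I) ∈ sect d δ)
    (t : ℂ) (ht : t ≠ 0)
    (hcos : δ1 ≤ Real.cos (k * (γ - t.arg)))
    (hdom : ‖t‖ ^ k < δ1 / K) :
    laplaceRay k γ (fun u => ((k : ℂ) * u ^ k) • f u) t =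
      t ^ (k + 1) • deriv (laplaceRay k γ f) t := by
  set eγ : ℂ := Complex.exp ((γ:ℂ) * Complex.I) with heγ
  set u : ℝ → ℂ := fun r => (r:ℂ) * eγ with hudef
  set ψ : ℂ → ℝ := fun x => ((eγ / x) ^ k).re with hψdef
  have heγabs : ‖eγ‖ = 1 := by simp [heγ, Complex.norm_exp]
  have huabs : ∀ r : ℝ, 0 < r → ‖(u r)‖ = r := by
    intro r hr
    simp [hudef, heγabs, abs_of_pos hr]
  have hre : ∀ (x : ℂ) (r : ℝ), (-(u r / x) ^ k).re = -(r ^ k * ψ x) := by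
    intro x r
    have h : u r / x = (r:ℂ) * (eγ / x) := mul_div_assoc _ _ _
    rw [h, mul_pow, ← Complex.ofReal_pow, Complex.neg_re, Complex.re_ofReal_mul]
  have htabs : 0 < ‖t‖ := norm_pos_iff.mpr ht
  have htk : 0 < ‖t‖ ^ k := pow_pos htabs k
  have hψt : ψ t = Real.cos (k * (γ - t.arg)) * (‖t‖ ^ k)⁻¹ := aux_psi k γ t ht
  have hKψ : K < ψ t := by
    rw [hψt]
    have h1 : ‖t‖ ^ k * K < δ1 := (lt_div_iff₀ hK).mp hdom
    rw [← div_eq_mul_inv, lt_div_iff₀ htk]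
    nlinarith [hcos]
  set B : ℝ := (K + ψ t) / 2 with hB
  have hKB : K < B := by rw [hB]; linarith
  have hBψ : B < ψ t := by rw [hB]; linarith
  set m : ℝ := ‖t‖ / 2 with hm
  have hm0 : 0 < m := half_pos htabs
  have hψcont : ContinuousAt ψ t := by
    apply Complex.continuous_re.continuousAt.comp
    exact (continuousAt_const.div continuousAt_id ht).pow k
  have hev : ∀ᶠ x in nhds t, x ≠ 0 ∧ B < ψ x ∧ m < ‖x‖ := by
    refine Filter.Eventually.and ?_ (Filter.Eventually.and ?_ ?_)
    · exact eventually_ne_nhds ht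
    · exact hψcont.eventually_mem (isOpen_Ioi.mem_nhds hBψ)
    · exact continuous_norm.continuousAt.eventually_mem
        (isOpen_Ioi.mem_nhds (by simp only [mem_Ioi, hm]; linarith [htabs]))
  rw [Metric.eventually_nhds_iff] at hev
  obtain ⟨ε, hε, hball⟩ := hev
  set F : ℂ → ℝ → E := fun x r => (Complex.exp (-(u r / x) ^ k) / (r:ℂ)) • f (u r) with hF
  set F' : ℂ → ℝ → E := fun x r =>
    ((Complex.exp (-(u r / x) ^ k) * ((k:ℂ) * (u r) ^ k * x ^ (-(k:ℤ) - 1))) / (r:ℂ)) • f (u r)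
    with hF'
  have hfu : ContinuousOn (fun r : ℝ => f (u r)) (Ioi 0) := by
    apply hcont.comp ((Complex.continuous_ofReal.mul continuous_const).continuousOn)
    exact fun r hr => Set.mem_union_left _ (hray r hr)
  have hrne : ∀ r : ℝ, r ∈ Ioi (0:ℝ) → (r:ℂ) ≠ 0 := by
    intro r hr
    exact_mod_cast (ne_of_gt (mem_Ioi.mp hr))
  have hmeas : ∀ x : ℂ, AEStronglyMeasurable (F x) (volume.restrict (Ioi 0)) := by
    intro x
    apply ContinuousOn.aestronglyMeasurable ?_ measurableSet_Ioi
    apply ContinuousOn.smul ?_ hfu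
    apply ContinuousOn.div ?_ Complex.continuous_ofReal.continuousOn hrne
    exact (Complex.continuous_exp.comp
      ((((Complex.continuous_ofReal.mul continuous_const).div_const x).pow k).neg)).continuousOn
  have hmeas' : AEStronglyMeasurable (F' t) (volume.restrict (Ioi 0)) := by
    apply ContinuousOn.aestronglyMeasurable ?_ measurableSet_Ioi
    apply ContinuousOn.smul ?_ hfu
    apply ContinuousOn.div ?_ Complex.continuous_ofReal.continuousOn hrne
    apply ContinuousOn.mul
    · exact (Complex.continuous_exp.comp
        ((((Complex.continuous_ofReal.mul continuous_const).div_const t).pow k).neg)).continuousOn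
    · exact (continuous_const.mul
        (((Complex.continuous_ofReal.mul continuous_const).pow k))).mul
        continuous_const |>.continuousOn
  have hbound_f : ∀ r ∈ Ioi (0:ℝ), ‖f (u r)‖ ≤ C * r * Real.exp (K * r ^ k) := by
    intro r hr
    have h := hgrowth (u r) (hray r (mem_Ioi.mp hr))
    rwa [huabs r (mem_Ioi.mp hr)] at h
  have hnorm : ∀ (x : ℂ), ∀ r ∈ Ioi (0:ℝ),
      ‖F x r‖ = Real.exp (-(r ^ k * ψ x)) / r * ‖f (u r)‖ := by
    intro x r hr
    rw [hF]
    rw [norm_smul, norm_div, Complex.norm_exp, hre, Complex.norm_real, Real.norm_eq_abs,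
      abs_of_pos (mem_Ioi.mp hr)]
  have hnorm' : ∀ (x : ℂ), ∀ r ∈ Ioi (0:ℝ),
      ‖F' x r‖ = Real.exp (-(r ^ k * ψ x)) * ((k:ℝ) * r ^ k * ‖x‖ ^ (-(k:ℤ) - 1)) / r
        * ‖f (u r)‖ := by
    intro x r hr
    rw [hF']
    rw [norm_smul, norm_div, norm_mul, norm_mul, norm_mul, norm_pow, norm_zpow,
      Complex.norm_exp, hre, Complex.norm_real, Real.norm_eq_abs, Complex.norm_natCast, abs_of_pos (mem_Ioi.mp hr),
      huabs r (mem_Ioi.mp hr)]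
  have hFt_int : Integrable (F t) (volume.restrict (Ioi 0)) := by
    refine Integrable.mono' (aux_int 0 k hk C (ψ t - K) (by linarith)) (hmeas t) ?_
    refine (ae_restrict_iff' measurableSet_Ioi).2 (ae_of_all _ fun r hr => ?_)
    have hr0 : 0 < r := mem_Ioi.mp hr
    rw [hnorm t r hr]
    have h1 : Real.exp (-(r ^ k * ψ t)) / r * ‖f (u r)‖
        ≤ Real.exp (-(r ^ k * ψ t)) / r * (C * r * Real.exp (K * r ^ k)) := by
      apply mul_le_mul_of_nonneg_left (hbound_f r hr) (by positivity)
    refine h1.trans (le_of_eq ?_)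
    rw [pow_zero, one_mul]
    rw [show Real.exp (-(r ^ k * ψ t)) / r * (C * r * Real.exp (K * r ^ k))
        = C * (Real.exp (-(r ^ k * ψ t)) * Real.exp (K * r ^ k)) * (r / r) by ring]
    rw [div_self (ne_of_gt hr0), mul_one, ← Real.exp_add]
    ring_nf
  have h_bound : ∀ᵐ r ∂(volume.restrict (Ioi 0)), ∀ x ∈ ball t ε,
      ‖F' x r‖ ≤ (k * C * (m ^ (k+1))⁻¹) * (r ^ k * Real.exp (-(B - K) * r ^ k)) := by
    refine (ae_restrict_iff' measurableSet_Ioi).2 (ae_of_all _ fun r hr => ?_)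
    intro x hx
    have hr0 : 0 < r := mem_Ioi.mp hr
    obtain ⟨hx0, hψx, hmx⟩ := hball (mem_ball.mp hx)
    have hxabs : 0 < ‖x‖ := hm0.trans hmx
    have hzp : ‖x‖ ^ (-(k:ℤ) - 1) ≤ (m ^ (k+1))⁻¹ := by
      rw [show -(k:ℤ) - 1 = -((k+1 : ℕ) : ℤ) by push_cast; ring, zpow_neg, zpow_natCast]
      exact inv_anti₀ (pow_pos hm0 _) (pow_le_pow_left₀ hm0.le hmx.le _)
    have hexp : Real.exp (-(r ^ k * ψ x)) ≤ Real.exp (-(B * r ^ k)) := by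
      apply Real.exp_le_exp.2
      have := mul_le_mul_of_nonneg_right hψx.le (pow_nonneg hr0.le k)
      nlinarith
    rw [hnorm' x r hr]
    calc Real.exp (-(r ^ k * ψ x)) * ((k:ℝ) * r ^ k * ‖x‖ ^ (-(k:ℤ) - 1)) / r
          * ‖f (u r)‖
        ≤ Real.exp (-(B * r ^ k)) * ((k:ℝ) * r ^ k * (m ^ (k+1))⁻¹) / r
          * (C * r * Real.exp (K * r ^ k)) := by
          have hzp0 : (0:ℝ) ≤ ‖x‖ ^ (-(k:ℤ) - 1) := zpow_nonneg hxabs.le _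
          gcongr
          exact hbound_f r hr
      _ = (k * C * (m ^ (k+1))⁻¹) * (r ^ k * Real.exp (-(B - K) * r ^ k)) := by
          rw [show -(B - K) * r ^ k = -(B * r ^ k) + K * r ^ k by ring, Real.exp_add]
          field_simp
  have h_diff : ∀ᵐ r ∂(volume.restrict (Ioi 0)), ∀ x ∈ ball t ε,
      HasDerivAt (fun y => F y r) (F' x r) x := by
    refine (ae_restrict_iff' measurableSet_Ioi).2 (ae_of_all _ fun r hr => ?_)
    intro x hx
    obtain ⟨hx0, -, -⟩ := hball (mem_ball.mp hx)
    exact ((aux_deriv k (u r) x hx0).div_const (r:ℂ)).smul_const (f (u r))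
  obtain ⟨-, hderiv⟩ := hasDerivAt_integral_of_dominated_loc_of_deriv_le (Metric.ball_mem_nhds t hε)
    (Filter.Eventually.of_forall hmeas) hFt_int hmeas' h_bound
    (aux_int k k hk (k * C * (m ^ (k+1))⁻¹) (B - K) (by linarith)) h_diff
  have hlap : HasDerivAt (laplaceRay k γ f) ((k:ℝ) • ∫ r in Ioi (0:ℝ), F' t r) t := by
    have h := hderiv.const_smul (k:ℝ)
    have heq : laplaceRay k γ f = fun x => (k:ℝ) • ∫ r in Ioi (0:ℝ), F x r := rfl
    rw [heq]
    exact h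
  rw [hlap.deriv]
  have hstep : t ^ (k+1) • ((k:ℝ) • ∫ r in Ioi (0:ℝ), F' t r)
      = (k:ℝ) • ∫ r in Ioi (0:ℝ), t ^ (k+1) • F' t r := by
    rw [integral_smul, smul_comm]
  rw [hstep]
  show (k:ℝ) • ∫ r in Ioi (0:ℝ),
      (Complex.exp (-(u r / t) ^ k) / (r:ℂ)) • ((k:ℂ) * (u r) ^ k) • f (u r)
    = (k:ℝ) • ∫ r in Ioi (0:ℝ), t ^ (k+1) • F' t r
  congr 1
  apply setIntegral_congr_fun measurableSet_Ioi
  intro r hr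
  have hr0 : 0 < r := mem_Ioi.mp hr
  have hrc : (r:ℂ) ≠ 0 := hrne r hr
  have htk1 : t ^ (k+1) ≠ 0 := pow_ne_zero _ ht
  simp only [hF', smul_smul]
  congr 1
  rw [show (t:ℂ) ^ (-(k:ℤ) - 1) = (t ^ (k+1))⁻¹ by
    rw [show -(k:ℤ) - 1 = -((k+1 : ℕ) : ℤ) by push_cast; ring, zpow_neg, zpow_natCast]]
  field_simp
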